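/- Fix integers n ≥ 1 and k with k ≥ e^n, and let p_c be a probability mass function on the alphabet {0, 1, …, k} with p_c(0) ≥ 1/2 and p_c(i) = (1 − p_c(0))/k for all 1 ≤ i ≤ k. Then with probability at least 1 − 2^{−n} over X^n ∼ p_c^{⊗n}, the missing mass satisfies (1 − p_c(0))·(1 − n·e^{−n}) ≤ M_0(X^n) ≤ 1 − p_c(0); in particular |M_0(X^n) − (1 − p_c(0))| ≤ n·e^{−n}. -/

import Mathlib

open scoped BigOperators Classical

noncomputable section

/-- `N_u(X^n)`: the number of appearances of the symbol `u` in the sample `x`. -/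
def nOcc {m n : ℕ} (x : Fin n → Fin m) (u : Fin m) : ℕ :=
  (Finset.univ.filter fun i => x i = u).card

/-- The missing mass `M₀(X^n) = ∑_{u=0}^{k} q(u) 𝟙[N_u(X^n) = 0]` on `{0,…,k}`. -/
def missingMass {m n : ℕ} (q : Fin m → ℝ) (x : Fin n → Fin m) : ℝ :=
  ∑ u : Fin m, if nOcc x u = 0 then q u else 0

set_option maxHeartbeats 1000000 in
/-- **Lemma 9:** let `n ≥ 1`, `k ≥ eⁿ`, and let `p_c` be a pmf on `{0,…,k}` with
`p_c(0) ≥ 1/2` and `p_c(i) = (1 - p_c(0))/k` for `1 ≤ i ≤ k`.  Then, with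
probability at least `1 - 2⁻ⁿ` over `X^n ∼ p_c^⊗n`, the missing mass satisfies
`(1 - p_c(0))(1 - n e⁻ⁿ) ≤ M₀(X^n) ≤ 1 - p_c(0)`, and in particular
`|M₀(X^n) - (1 - p_c(0))| ≤ n e⁻ⁿ`. -/
theorem missing_mass_concentration_Pc (n k : ℕ) (hn : 1 ≤ n)
    (hk : Real.exp n ≤ (k : ℝ))
    (q : Fin (k + 1) → ℝ) (hq_nonneg : ∀ u, 0 ≤ q u) (hq_sum : (∑ u, q u) = 1)
    (hq0 : 1 / 2 ≤ q 0) (hq_unif : ∀ i : Fin (k + 1), i ≠ 0 → q i = (1 - q 0) / k) :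
    1 - (1 / 2 : ℝ) ^ n ≤
      ∑ x ∈ Finset.univ.filter (fun x : Fin n → Fin (k + 1) =>
          (1 - q 0) * (1 - (n : ℝ) * Real.exp (-(n : ℝ))) ≤ missingMass q x ∧
          missingMass q x ≤ 1 - q 0 ∧
          |missingMass q x - (1 - q 0)| ≤ (n : ℝ) * Real.exp (-(n : ℝ))),
        ∏ i, q (x i) := by
  classical
  have hq0le : q 0 ≤ 1 := by
    rw [← hq_sum]
    exact Finset.single_le_sum (fun u _ => hq_nonneg u) (Finset.mem_univ 0)
  have hkpos : (0:ℝ) < k := lt_of_lt_of_le (Real.exp_pos _) hk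
  have hE : Real.exp (-(n:ℝ)) * k ≥ 1 := by
    have h1 : Real.exp (-(n:ℝ)) * Real.exp (n:ℝ) = 1 := by
      rw [← Real.exp_add]; simp
    nlinarith [Real.exp_pos (-(n:ℝ))]
  have hEpos : (0:ℝ) < Real.exp (-(n:ℝ)) := Real.exp_pos _
  have hkn : (n:ℝ) + 1 ≤ (k:ℝ) := le_trans (by linarith [Real.add_one_le_exp (n:ℝ)]) hk
  have hknnat : n ≤ k := by exact_mod_cast le_of_lt (by linarith : (n:ℝ) < k)
  have hsum_ne : ∑ u ∈ Finset.univ.erase (0 : Fin (k+1)), q u = 1 - q 0 := by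
    have h := Finset.add_sum_erase Finset.univ q (Finset.mem_univ (0 : Fin (k+1)))
    rw [hq_sum] at h; linarith
  -- pointwise claim
  have key : ∀ x : Fin n → Fin (k+1), (∃ i, x i = 0) →
      (1 - q 0) * (1 - (n : ℝ) * Real.exp (-(n : ℝ))) ≤ missingMass q x ∧
      missingMass q x ≤ 1 - q 0 ∧
      |missingMass q x - (1 - q 0)| ≤ (n : ℝ) * Real.exp (-(n : ℝ)) := by
    rintro x ⟨i₀, hi₀⟩
    have hocc0 : ¬ nOcc x 0 = 0 :=
      Finset.card_ne_zero_of_mem (Finset.mem_filter.2 ⟨Finset.mem_univ i₀, hi₀⟩)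
    have hM : missingMass q x
        = ∑ u ∈ Finset.univ.erase (0 : Fin (k+1)), if nOcc x u = 0 then q u else 0 := by
      unfold missingMass
      rw [← Finset.add_sum_erase Finset.univ _ (Finset.mem_univ (0 : Fin (k+1))),
        if_neg hocc0, zero_add]
    have hub : missingMass q x ≤ 1 - q 0 := by
      rw [hM, ← hsum_ne]
      refine Finset.sum_le_sum fun u _ => ?_
      split
      · exact le_refl _
      · exact hq_nonneg u
    set A : Finset (Fin (k+1)) :=
      (Finset.univ.erase (0 : Fin (k+1))).filter (fun u => nOcc x u = 0) with hA
    have hMval : missingMass q x = A.card * ((1 - q 0) / k) := by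
      rw [hM, ← Finset.sum_filter, ← hA]
      rw [Finset.sum_congr rfl (fun u hu => hq_unif u
        (Finset.ne_of_mem_erase (Finset.mem_of_mem_filter u hu)))]
      simp [Finset.sum_const, nsmul_eq_mul]
      left; rfl
    have hBsub : (Finset.univ.erase (0 : Fin (k+1))).filter (fun u => ¬ nOcc x u = 0)
        ⊆ Finset.image x Finset.univ := by
      intro u hu
      simp only [Finset.mem_filter] at hu
      obtain ⟨i, hi⟩ : ∃ i, x i = u := by
        by_contra h
        push_neg at h
        apply hu.2
        simp only [nOcc, Finset.card_eq_zero, Finset.filter_eq_empty_iff]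
        exact fun i _ => h i
      exact Finset.mem_image.2 ⟨i, Finset.mem_univ i, hi⟩
    have hBcard : ((Finset.univ.erase (0 : Fin (k+1))).filter (fun u => ¬ nOcc x u = 0)).card ≤ n :=
      le_trans (Finset.card_le_card hBsub) (le_trans Finset.card_image_le (by simp))
    have hsplit := Finset.card_filter_add_card_filter_not
      (s := Finset.univ.erase (0 : Fin (k+1))) (p := fun u => nOcc x u = 0)
    have hErase : (Finset.univ.erase (0 : Fin (k+1))).card = k := by
      simp [Finset.card_erase_of_mem]
    have hAcard : k - n ≤ A.card := by rw [hA]; omega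
    have hAcardR : (k:ℝ) - n ≤ (A.card : ℝ) := by
      have : ((k - n : ℕ) : ℝ) ≤ (A.card : ℝ) := by exact_mod_cast hAcard
      rwa [Nat.cast_sub hknnat] at this
    have hq01 : 0 ≤ 1 - q 0 := by linarith
    have hlb : (1 - q 0) * (1 - (n : ℝ) * Real.exp (-(n : ℝ))) ≤ missingMass q x := by
      rw [hMval]
      have hc : (1 - q 0) / k * k = 1 - q 0 := div_mul_cancel₀ _ (ne_of_gt hkpos)
      have hcnn : 0 ≤ (1 - q 0) / k := div_nonneg hq01 hkpos.le
      have h1 : ((k:ℝ) - n) * ((1 - q 0)/k) ≤ A.card * ((1 - q 0)/k) :=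
        mul_le_mul_of_nonneg_right hAcardR hcnn
      nlinarith [mul_nonneg (mul_nonneg hq01 (Nat.cast_nonneg n : (0:ℝ) ≤ (n:ℝ)))
        (by linarith : (0:ℝ) ≤ Real.exp (-(n:ℝ)) * k - 1), hc, hkpos, h1,
        (Nat.cast_nonneg n : (0:ℝ) ≤ (n:ℝ))]
    have habs : |missingMass q x - (1 - q 0)| ≤ (n : ℝ) * Real.exp (-(n : ℝ)) := by
      rw [abs_le]
      have hnE : (0:ℝ) ≤ (n:ℝ) * Real.exp (-(n:ℝ)) :=
        mul_nonneg (Nat.cast_nonneg n) hEpos.le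
      constructor
      · nlinarith [mul_nonneg (by linarith : (0:ℝ) ≤ q 0) hnE]
      · nlinarith
    exact ⟨hlb, hub, habs⟩
  -- global part
  have hnonneg : ∀ x : Fin n → Fin (k+1), 0 ≤ ∏ i, q (x i) :=
    fun x => Finset.prod_nonneg fun i _ => hq_nonneg _
  have hsub : (Finset.univ.filter fun x : Fin n → Fin (k+1) => ∃ i, x i = 0)
      ⊆ Finset.univ.filter (fun x : Fin n → Fin (k + 1) =>
          (1 - q 0) * (1 - (n : ℝ) * Real.exp (-(n : ℝ))) ≤ missingMass q x ∧
          missingMass q x ≤ 1 - q 0 ∧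
          |missingMass q x - (1 - q 0)| ≤ (n : ℝ) * Real.exp (-(n : ℝ))) := by
    intro x hx
    simp only [Finset.mem_filter] at hx ⊢
    exact ⟨Finset.mem_univ x, key x hx.2⟩
  refine le_trans ?_ (Finset.sum_le_sum_of_subset_of_nonneg hsub (fun x _ _ => hnonneg x))
  -- total sum
  have htotal : ∑ x : Fin n → Fin (k+1), ∏ i, q (x i) = 1 := by
    have := Finset.sum_pow' Finset.univ q n
    rw [hq_sum, one_pow] at this
    have h2 : (Fintype.piFinset fun _ : Fin n => (Finset.univ : Finset (Fin (k+1))))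
        = Finset.univ := by
      ext x; simp [Fintype.mem_piFinset]
    rw [h2] at this
    exact this.symm
  have hcompl : ∑ x ∈ Finset.univ.filter
      (fun x : Fin n → Fin (k+1) => ¬ ∃ i, x i = 0), ∏ i, q (x i) = (1 - q 0) ^ n := by
    have h1 : (Finset.univ.filter (fun x : Fin n → Fin (k+1) => ¬ ∃ i, x i = 0))
        = Fintype.piFinset (fun _ : Fin n => Finset.univ.erase (0 : Fin (k+1))) := by
      ext x
      simp [Fintype.mem_piFinset]
    rw [h1, ← Finset.sum_pow' _ q n, hsum_ne]
  have hsplit := Finset.sum_filter_add_sum_filter_not Finset.univ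
    (fun x : Fin n → Fin (k+1) => ∃ i, x i = 0) (fun x => ∏ i, q (x i))
  have hEsum : ∑ x ∈ Finset.univ.filter
      (fun x : Fin n → Fin (k+1) => ∃ i, x i = 0), ∏ i, q (x i) = 1 - (1 - q 0) ^ n := by
    rw [htotal] at hsplit
    rw [hcompl] at hsplit
    linarith
  rw [hEsum]
  have : (1 - q 0) ^ n ≤ (1/2 : ℝ) ^ n := by
    exact pow_le_pow_left₀ (by linarith) (by linarith) n
  linarith
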